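/- Let T be a positive sesquilinear form on a subspace D of a Hilbert space, and let ‖·‖ and ‖·‖' be two norms on D, both compatible with T, such that D is complete with respect to each of them. Then the norms ‖·‖ and ‖·‖' are equivalent. -/

import Mathlib

noncomputable section

open Filter Topology Function
open scoped InnerProductSpace

namespace Paper

variable {V : Type} [AddCommGroup V] [Module ℂ V]

/-- `n` is a norm on the complex vector space `V`. -/
def IsNormFn (n : V → ℝ) : Prop :=
  (∀ x : V, n x = 0 ↔ x = 0) ∧
    (∀ (c : ℂ) (x : V), n (c • x) = ‖c‖ * n x) ∧
      ∀ x y : V, n (x + y) ≤ n x + n y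

/-- `ξ` is a Cauchy sequence with respect to the norm `n`. -/
def IsCauchyWrt (n : V → ℝ) (ξ : ℕ → V) : Prop :=
  ∀ ε : ℝ, 0 < ε → ∃ N : ℕ, ∀ p q : ℕ, N ≤ p → N ≤ q → n (ξ p - ξ q) < ε

/-- `ξ` tends to `x` with respect to the norm `n`. -/
def TendstoWrt (n : V → ℝ) (ξ : ℕ → V) (x : V) : Prop :=
  Tendsto (fun k => n (ξ k - x)) atTop (𝓝 0)

/-- `V` is complete with respect to the norm `n`. -/
def CompleteWrt (n : V → ℝ) : Prop :=
  ∀ ξ : ℕ → V, IsCauchyWrt n ξ → ∃ x : V, TendstoWrt n ξ x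

/-- The two norms `n₁` and `n₂` are equivalent. -/
def EquivNorms (n₁ n₂ : V → ℝ) : Prop :=
  ∃ c₁ : ℝ, 0 < c₁ ∧ ∃ c₂ : ℝ, 0 < c₂ ∧ ∀ x : V, n₁ x ≤ c₁ * n₂ x ∧ n₂ x ≤ c₂ * n₁ x

/-- `Ω` is a sesquilinear form: linear in the first entry, conjugate-linear in the second. -/
def IsSesq (Ω : V → V → ℂ) : Prop :=
  (∀ η : V, IsLinearMap ℂ fun ξ => Ω ξ η) ∧
    ∀ ξ : V, IsLinearMap ℂ fun η => (starRingEnd ℂ) (Ω ξ η)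

/-- `T` is a positive form: `T(ξ,ξ) ≥ 0` for every `ξ`. -/
def IsPositiveForm (T : V → V → ℂ) : Prop :=
  ∀ x : V, (T x x).im = 0 ∧ 0 ≤ (T x x).re

/-- The norm `n` is compatible with the positive sesquilinear form `T`. -/
def CompatibleWithForm (T : V → V → ℂ) (n : V → ℝ) : Prop :=
  (∃ α : ℝ, 0 < α ∧ ∀ ξ : V, (T ξ ξ).re ≤ α * n ξ ^ 2) ∧
    ∀ ξ : ℕ → V, Tendsto (fun k => (T (ξ k) (ξ k)).re) atTop (𝓝 0) →
      IsCauchyWrt n ξ → Tendsto (fun k => n (ξ k)) atTop (𝓝 0)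

/-- A realization of `(V, n)` as a dense subspace of a reflexive Banach space `E`. -/
structure BanachModel (V : Type) [AddCommGroup V] [Module ℂ V] (n : V → ℝ) : Type 1 where
  E : Type
  [instGroup : NormedAddCommGroup E]
  [instSpace : NormedSpace ℂ E]
  [instComplete : CompleteSpace E]
  j : V →ₗ[ℂ] E
  isometry : ∀ x : V, ‖j x‖ = n x
  dense : DenseRange j
  reflexive : Surjective (NormedSpace.inclusionInDoubleDual ℂ E)

/-- `V` endowed with the norm `n` is a reflexive Banach space. -/
def IsReflexiveBanachWrt (n : V → ℝ) : Prop :=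
  ∃ M : BanachModel V n, Surjective M.j

/-- The completion of `V` with respect to the norm `n` is a reflexive Banach space. -/
def CompletionIsReflexiveBanach (n : V → ℝ) : Prop :=
  Nonempty (BanachModel V n)

variable {H : Type} [NormedAddCommGroup H] [InnerProductSpace ℂ H]

/-- The embedding of `D[n]` into `H` is continuous. -/
def EmbedsContinuously (D : Submodule ℂ H) (n : D → ℝ) : Prop :=
  ∃ α : ℝ, 0 < α ∧ ∀ ξ : D, ‖(ξ : H)‖ ≤ α * n ξ

/-- The norm `n` on `D` is compatible with the inner product of `H`. -/
def CompatibleWithInner (D : Submodule ℂ H) (n : D → ℝ) : Prop :=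
  EmbedsContinuously D n ∧
    ∀ ξ : ℕ → D, Tendsto (fun k => ‖(ξ k : H)‖) atTop (𝓝 0) →
      IsCauchyWrt n ξ → Tendsto (fun k => n (ξ k)) atTop (𝓝 0)

/-- The form `Ω` is bounded on `D[n]`. -/
def BoundedOn (D : Submodule ℂ H) (Ω : D → D → ℂ) (n : D → ℝ) : Prop :=
  ∃ β : ℝ, 0 < β ∧ ∀ ξ η : D, ‖Ω ξ η‖ ≤ β * n ξ * n η

/-- `Ω` is q-closed with respect to the norm `n` (Definition 5.2 of Di Bella–Trapani). -/
def IsQClosed (D : Submodule ℂ H) (Ω : D → D → ℂ) (n : D → ℝ) : Prop :=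
  IsNormFn n ∧ CompatibleWithInner D n ∧ IsReflexiveBanachWrt n ∧ BoundedOn D Ω n

/-- `Ω` is q-closable with respect to the norm `n`. -/
def IsQClosable (D : Submodule ℂ H) (Ω : D → D → ℂ) (n : D → ℝ) : Prop :=
  IsNormFn n ∧ CompatibleWithInner D n ∧ CompletionIsReflexiveBanach n ∧ BoundedOn D Ω n

/-- `Λ` is a bounded conjugate-linear functional on `D[n]`,
i.e. an element of the conjugate dual of `D[n]`. -/
def MemConjDual (D : Submodule ℂ H) (n : D → ℝ) (Λ : D → ℂ) : Prop :=
  (∀ x y : D, Λ (x + y) = Λ x + Λ y) ∧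
    (∀ (c : ℂ) (x : D), Λ (c • x) = (starRingEnd ℂ) c * Λ x) ∧
      ∃ C : ℝ, ∀ x : D, ‖Λ x‖ ≤ C * n x

/-- `Υ` is a bounded sesquilinear form on `H`. -/
def IsBoundedForm (Υ : H → H → ℂ) : Prop :=
  IsSesq Υ ∧ ∃ C : ℝ, ∀ x y : H, ‖Υ x y‖ ≤ C * ‖x‖ * ‖y‖

/-- `Υ ∈ P₀(Ω)`: `N(Ω+Υ) = {0}` and every element of the conjugate dual of `D[n]`
is represented by `Ω+Υ`. -/
def InP0 (D : Submodule ℂ H) (Ω : D → D → ℂ) (n : D → ℝ) (Υ : H → H → ℂ) : Prop :=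
  (∀ ξ : D, (∀ η : D, Ω ξ η + Υ ↑ξ ↑η = 0) → ξ = 0) ∧
    ∀ Λ : D → ℂ, MemConjDual D n Λ → ∃ ξ : D, ∀ η : D, Λ η = Ω ξ η + Υ ↑ξ ↑η

/-- `Ω` is solvable with respect to the norm `n`. -/
def IsSolvable (D : Submodule ℂ H) (Ω : D → D → ℂ) (n : D → ℝ) : Prop :=
  IsQClosed D Ω n ∧ ∃ Υ : H → H → ℂ, IsBoundedForm Υ ∧ InP0 D Ω n Υ

/-- The numerical range of a form on `D`. -/
def NumRangeForm (D : Submodule ℂ H) (Ω : D → D → ℂ) : Set ℂ :=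
  {z : ℂ | ∃ ξ : D, ‖(ξ : H)‖ = 1 ∧ z = Ω ξ ξ}

/-- The numerical range of a form on `H`. -/
def NumRangeFormH (Υ : H → H → ℂ) : Set ℂ :=
  {z : ℂ | ∃ x : H, ‖x‖ = 1 ∧ z = Υ x x}

/-- `sup { |Θ(ξ,η)| : ‖η‖_Ω = 1 }`. -/
def FormSup (D : Submodule ℂ H) (Θ : D → D → ℂ) (n : D → ℝ) (ξ : D) : ℝ :=
  sSup {r : ℝ | ∃ η : D, n η = 1 ∧ r = ‖Θ ξ η‖}

end Paper

namespace Paper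

section Aux
variable {V : Type} [AddCommGroup V] [Module ℂ V]

lemma IsNormFn.neg {n : V → ℝ} (h : IsNormFn n) (x : V) : n (-x) = n x := by
  have := h.2.1 (-1 : ℂ) x
  simpa using this

lemma IsNormFn.nonneg {n : V → ℝ} (h : IsNormFn n) (x : V) : 0 ≤ n x := by
  have h0 : n (0 : V) = 0 := (h.1 0).mpr rfl
  have := h.2.2 x (-x)
  rw [add_neg_cancel, h0, h.neg x] at this
  linarith

def NC {V : Type} (_n : V → ℝ) : Type := V

def toNC {V : Type} (n : V → ℝ) (x : V) : NC n := x
def ofNC {V : Type} (n : V → ℝ) (x : NC n) : V := x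

instance {n : V → ℝ} : AddCommGroup (NC n) := inferInstanceAs (AddCommGroup V)
instance {n : V → ℝ} : Module ℂ (NC n) := inferInstanceAs (Module ℂ V)

@[reducible] noncomputable def ncNormed {n : V → ℝ} (h : IsNormFn n) : NormedAddCommGroup (NC n) :=
  AddGroupNorm.toNormedAddCommGroup
    { toFun := n
      map_zero' := (h.1 0).mpr rfl
      add_le' := h.2.2
      neg' := h.neg
      eq_zero_of_map_eq_zero' := fun x hx => (h.1 x).mp hx }

lemma dominated_equiv {na nb : V → ℝ} (ha : IsNormFn na) (hb : IsNormFn nb)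
    (hca : CompleteWrt na) (hcb : CompleteWrt nb) (hle : ∀ x, na x ≤ nb x) :
    ∃ C : ℝ, 0 < C ∧ ∀ x, nb x ≤ C * na x := by
  letI Ia : NormedAddCommGroup (NC na) := ncNormed ha
  letI Ib : NormedAddCommGroup (NC nb) := ncNormed hb
  have hna : ∀ x : NC na, ‖x‖ = na x := fun _ => rfl
  have hnb : ∀ x : NC nb, ‖x‖ = nb x := fun _ => rfl
  letI : NormedSpace ℂ (NC na) := ⟨fun c x => le_of_eq (ha.2.1 c x)⟩
  letI : NormedSpace ℂ (NC nb) := ⟨fun c x => le_of_eq (hb.2.1 c x)⟩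
  have hcomp : ∀ (m : V → ℝ) (hm : IsNormFn m), CompleteWrt m →
      ∀ u : ℕ → NC m, (∀ ε : ℝ, 0 < ε → ∃ N : ℕ, ∀ p q : ℕ, N ≤ p → N ≤ q →
        m (u p - u q) < ε) → ∃ a : NC m, Tendsto (fun k => m (u k - a)) atTop (𝓝 0) :=
    fun m hm hcm u hu => hcm u hu
  letI : CompleteSpace (NC na) := by
    refine Metric.complete_of_cauchySeq_tendsto fun u hu => ?_
    obtain ⟨a, haa⟩ := hca u (fun ε hε => by
      obtain ⟨N, hN⟩ := Metric.cauchySeq_iff.mp hu ε hε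
      exact ⟨N, fun p q hp hq => by have := hN p hp q hq; rw [dist_eq_norm] at this; exact this⟩)
    refine ⟨a, tendsto_iff_dist_tendsto_zero.mpr ?_⟩
    exact Tendsto.congr (fun k => (dist_eq_norm (u k) a).symm) haa
  letI : CompleteSpace (NC nb) := by
    refine Metric.complete_of_cauchySeq_tendsto fun u hu => ?_
    obtain ⟨a, haa⟩ := hcb u (fun ε hε => by
      obtain ⟨N, hN⟩ := Metric.cauchySeq_iff.mp hu ε hε
      exact ⟨N, fun p q hp hq => by have := hN p hp q hq; rw [dist_eq_norm] at this; exact this⟩)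
    refine ⟨a, tendsto_iff_dist_tendsto_zero.mpr ?_⟩
    exact Tendsto.congr (fun k => (dist_eq_norm (u k) a).symm) haa
  let e : NC nb ≃ₗ[ℂ] NC na :=
    { toFun := fun x => x, invFun := fun x => x,
      map_add' := fun _ _ => rfl, map_smul' := fun _ _ => rfl,
      left_inv := fun _ => rfl, right_inv := fun _ => rfl }
  have hcont : Continuous e := by
    refine AddMonoidHomClass.continuous_of_bound e.toLinearMap 1 fun x => ?_
    rw [hna, hnb, one_mul]
    exact hle x
  let e' := e.toContinuousLinearEquivOfContinuous hcont
  refine ⟨max ‖(e'.symm : NC na →L[ℂ] NC nb)‖ 1, lt_of_lt_of_le one_pos (le_max_right _ _),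
    fun x => ?_⟩
  have := (e'.symm : NC na →L[ℂ] NC nb).le_opNorm (toNC na x)
  rw [hna] at this
  have hx : nb ((e'.symm : NC na →L[ℂ] NC nb) (toNC na x)) = nb x := rfl
  rw [hnb] at this
  rw [hx] at this
  calc nb x ≤ ‖(e'.symm : NC na →L[ℂ] NC nb)‖ * na x := this
    _ ≤ max ‖(e'.symm : NC na →L[ℂ] NC nb)‖ 1 * na x :=
        mul_le_mul_of_nonneg_right (le_max_left _ _) (ha.nonneg x)

lemma equiv_of_complete {n₁ n₂ : V → ℝ} (h₁ : IsNormFn n₁) (h₂ : IsNormFn n₂)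
    (hc₁ : CompleteWrt n₁) (hc₂ : CompleteWrt n₂)
    (huniq : ∀ (ξ : ℕ → V) (x₁ x₂ : V), TendstoWrt n₁ ξ x₁ → TendstoWrt n₂ ξ x₂ → x₁ = x₂) :
    EquivNorms n₁ n₂ := by
  set n₃ : V → ℝ := fun x => n₁ x + n₂ x with hn₃
  have h₃ : IsNormFn n₃ := by
    refine ⟨fun x => ?_, fun c x => ?_, fun x y => ?_⟩
    · constructor
      · intro hx
        have h1 := h₁.nonneg x; have h2 := h₂.nonneg x
        have : n₁ x = 0 := by simp only [hn₃] at hx; linarith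
        exact (h₁.1 x).mp this
      · intro hx; subst hx
        simp only [hn₃, (h₁.1 0).mpr rfl, (h₂.1 0).mpr rfl, add_zero]
    · simp only [hn₃, h₁.2.1 c x, h₂.2.1 c x]; ring
    · have := h₁.2.2 x y; have := h₂.2.2 x y
      simp only [hn₃]; linarith
  have hc₃ : CompleteWrt n₃ := by
    intro ξ hξ
    have hcau₁ : IsCauchyWrt n₁ ξ := fun ε hε => by
      obtain ⟨N, hN⟩ := hξ ε hε
      exact ⟨N, fun p q hp hq => lt_of_le_of_lt
        (by have := h₂.nonneg (ξ p - ξ q); simp only [hn₃] at hN ⊢; linarith [hN p q hp hq])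
        (hN p q hp hq)⟩
    have hcau₂ : IsCauchyWrt n₂ ξ := fun ε hε => by
      obtain ⟨N, hN⟩ := hξ ε hε
      exact ⟨N, fun p q hp hq => lt_of_le_of_lt
        (by have := h₁.nonneg (ξ p - ξ q); simp only [hn₃] at hN ⊢;
            linarith [hN p q hp hq]) (hN p q hp hq)⟩
    obtain ⟨x₁, hx₁⟩ := hc₁ ξ hcau₁
    obtain ⟨x₂, hx₂⟩ := hc₂ ξ hcau₂
    have hx12 : x₁ = x₂ := huniq ξ x₁ x₂ hx₁ hx₂
    refine ⟨x₁, ?_⟩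
    have : Tendsto (fun k => n₁ (ξ k - x₁) + n₂ (ξ k - x₁)) atTop (𝓝 (0 + 0)) :=
      Tendsto.add hx₁ (hx12 ▸ hx₂)
    simpa [TendstoWrt, hn₃] using this
  obtain ⟨C₁, hC₁pos, hC₁⟩ := dominated_equiv h₁ h₃ hc₁ hc₃
    (fun x => by have := h₂.nonneg x; simp only [hn₃]; linarith)
  obtain ⟨C₂, hC₂pos, hC₂⟩ := dominated_equiv h₂ h₃ hc₂ hc₃
    (fun x => by have := h₁.nonneg x; simp only [hn₃]; linarith)
  refine ⟨C₂, hC₂pos, C₁, hC₁pos, fun x => ?_⟩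
  constructor
  · have h1 := hC₂ x
    have h2 := h₂.nonneg x
    simp only [hn₃] at h1
    linarith
  · have h1 := hC₁ x
    have h2 := h₁.nonneg x
    simp only [hn₃] at h1
    linarith

end Aux

theorem compatible_complete_norms_equivalent {H : Type} [NormedAddCommGroup H]
    [InnerProductSpace ℂ H] [CompleteSpace H] (D : Submodule ℂ H) (T : ↥D → ↥D → ℂ)
    (hsesq : IsSesq T) (hpos : IsPositiveForm T)
    (n n' : ↥D → ℝ) (hn : IsNormFn n) (hn' : IsNormFn n')
    (hcompat : CompatibleWithForm T n) (hcompat' : CompatibleWithForm T n')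
    (hc : CompleteWrt n) (hc' : CompleteWrt n') :
    EquivNorms n n' := by
  apply equiv_of_complete hn hn' hc hc'
  intro ξ x x' h1 h2
  obtain ⟨α', hα'pos, hα'⟩ := hcompat'.1
  have hT : Tendsto (fun k => (T (ξ k - x') (ξ k - x')).re) atTop (𝓝 0) := by
    refine squeeze_zero (fun k => (hpos _).2) (fun k => hα' _) ?_
    have hmul : Tendsto (fun k => n' (ξ k - x') * n' (ξ k - x')) atTop (𝓝 (0 * 0)) :=
      h2.mul h2
    have := hmul.const_mul α'
    simpa [pow_two] using this
  have hcauζ : IsCauchyWrt n (fun k => ξ k - x') := by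
    intro ε hε
    have hev : ∀ᶠ k in atTop, n (ξ k - x) < ε / 2 :=
      h1.eventually (gt_mem_nhds (by linarith))
    obtain ⟨N, hN⟩ := eventually_atTop.mp hev
    refine ⟨N, fun p q hp hq => ?_⟩
    have heq : (ξ p - x') - (ξ q - x') = (ξ p - x) - (ξ q - x) := by abel
    rw [heq]
    calc n ((ξ p - x) - (ξ q - x)) ≤ n (ξ p - x) + n (-(ξ q - x)) := by
          have := hn.2.2 (ξ p - x) (-(ξ q - x)); simpa [sub_eq_add_neg] using this
      _ = n (ξ p - x) + n (ξ q - x) := by rw [hn.neg]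
      _ < ε / 2 + ε / 2 := add_lt_add (hN p hp) (hN q hq)
      _ = ε := by ring
  have h3 : Tendsto (fun k => n (ξ k - x')) atTop (𝓝 0) :=
    hcompat.2 (fun k => ξ k - x') hT hcauζ
  have hzero : n (x - x') = 0 := by
    have hle : ∀ k, n (x - x') ≤ n (ξ k - x) + n (ξ k - x') := by
      intro k
      have heq : x - x' = -(ξ k - x) + (ξ k - x') := by abel
      rw [heq]
      calc n (-(ξ k - x) + (ξ k - x')) ≤ n (-(ξ k - x)) + n (ξ k - x') := hn.2.2 _ _
        _ = n (ξ k - x) + n (ξ k - x') := by rw [hn.neg]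
    have hsum : Tendsto (fun k => n (ξ k - x) + n (ξ k - x')) atTop (𝓝 0) := by
      simpa using h1.add h3
    exact le_antisymm (ge_of_tendsto' hsum hle) (hn.nonneg _)
  have := (hn.1 _).mp hzero
  exact sub_eq_zero.mp this

end Paper
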